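/- Let F = 𝔽_3 and let G = S_3 act on F[x,y] via the reduction mod 3 of the representation sending (1 2) ↦ [[1,0],[0,−1]] and (2 3) ↦ [[−2,0],[1,2]] (the mod-3 reductions of [[1,3],[0,−1]] and [[−2,−3],[1,2]]). Then the invariant ring F[x,y]^G is the polynomial ring F[f', g'] with f' = x and g' = x⁴y² + x²y⁴ + y⁶. -/

import Mathlib

open MvPolynomial

/-- The linear-substitution action of an invertible matrix `M` on polynomials:
`(M • f)(a) = f (M⁻¹ • a)`, i.e. `X i ↦ ∑ j (M⁻¹) i j • X j`. -/
noncomputable def gAct {R : Type*} [CommRing R] {n : ℕ}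
    (M : Matrix.GeneralLinearGroup (Fin n) R) :
    MvPolynomial (Fin n) R →ₐ[R] MvPolynomial (Fin n) R :=
  aeval fun i => ∑ j, C ((M⁻¹ : Matrix.GeneralLinearGroup (Fin n) R) i j) * X j

/-- The ring of invariants `R[x_1,…,x_n]^G` of the representation `ρ : G →* GL_n(R)`. -/
noncomputable def invariantRing {R : Type*} [CommRing R] {n : ℕ} {G : Type*} [Group G]
    (ρ : G →* Matrix.GeneralLinearGroup (Fin n) R) : Subalgebra R (MvPolynomial (Fin n) R) :=
  ⨅ σ : G, AlgHom.equalizer (gAct (ρ σ)) (AlgHom.id R _)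

/-- A regular local ring: Noetherian, local, and the Krull dimension equals the
dimension of the cotangent space. -/
def IsRegularLocalRingP (A : Type*) [CommRing A] : Prop :=
  IsNoetherianRing A ∧ ∃ h : IsLocalRing A,
    haveI := h
    ringKrullDim A =
      Module.finrank (IsLocalRing.ResidueField A) (IsLocalRing.CotangentSpace A)

/-- A regular ring: Noetherian, and all localizations at primes are regular local rings. -/
def IsRegularRingP (A : Type*) [CommRing A] : Prop :=
  IsNoetherianRing A ∧ ∀ (p : Ideal A) (hp : p.IsPrime),
    haveI := hp
    IsRegularLocalRingP (Localization.AtPrime p)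

open scoped TensorProduct in
/-- The tensor product `B_{I_1}R ⊗_R ⋯ ⊗_R B_{I_n}R` of the blowup (Rees) algebras of the
ideals `I i`. -/
noncomputable def BlowupTensor (R : Type*) [CommRing R] {n : ℕ} (I : Fin n → Ideal R) : Type _ :=
  ⨂[R] i : Fin n, ↥(reesAlgebra (I i))

noncomputable instance (R : Type*) [CommRing R] {n : ℕ} (I : Fin n → Ideal R) :
    CommRing (BlowupTensor R I) := by unfold BlowupTensor; infer_instance

noncomputable instance (R : Type*) [CommRing R] {n : ℕ} (I : Fin n → Ideal R) :
    Algebra R (BlowupTensor R I) := by unfold BlowupTensor; infer_instance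

/-- A pseudoreflection: a nonidentity invertible matrix fixing a hyperplane pointwise,
i.e. `g - 1` has rank at most one. -/
def IsPseudoreflection {n : ℕ} {K : Type*} [Field K]
    (g : Matrix.GeneralLinearGroup (Fin n) K) : Prop :=
  g ≠ 1 ∧ Matrix.rank ((g : Matrix (Fin n) (Fin n) K) - 1) ≤ 1

/-- The matrix `[[1,0],[0,-1]]` over `𝔽₃`, the mod-3 reduction of `[[1,3],[0,-1]]`. -/
def N1 : Matrix.GeneralLinearGroup (Fin 2) (ZMod 3) :=
  ⟨!![1, 0; 0, -1], !![1, 0; 0, -1], by decide, by decide⟩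

/-- The matrix `[[-2,0],[1,2]]` over `𝔽₃`, the mod-3 reduction of `[[-2,-3],[1,2]]`. -/
def N2 : Matrix.GeneralLinearGroup (Fin 2) (ZMod 3) :=
  ⟨!![-2, 0; 1, 2], !![-2, 0; 1, 2], by decide, by decide⟩


namespace Stmt19Proof

lemma gAct_one {R : Type*} [CommRing R] {n : ℕ} :
    gAct (1 : Matrix.GeneralLinearGroup (Fin n) R) = AlgHom.id R _ := by
  apply MvPolynomial.algHom_ext
  intro i
  simp [gAct, Matrix.one_apply, ite_mul, Finset.sum_ite_eq]

lemma gAct_mul {R : Type*} [CommRing R] {n : ℕ}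
    (M N : Matrix.GeneralLinearGroup (Fin n) R) :
    gAct (M * N) = (gAct M).comp (gAct N) := by
  apply MvPolynomial.algHom_ext
  intro i
  simp only [gAct, AlgHom.comp_apply, aeval_X, map_sum, map_mul, aeval_C, mul_inv_rev,
    Units.val_mul, Matrix.mul_apply, C_mul, Finset.sum_mul, Finset.mul_sum, mul_assoc,
    MvPolynomial.algebraMap_eq]
  rw [Finset.sum_comm]

noncomputable def e1 : MvPolynomial (Fin 2) (ZMod 3) →ₐ[ZMod 3] MvPolynomial (Fin 2) (ZMod 3) :=
  aeval ![X 0, -X 1]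
noncomputable def e2 : MvPolynomial (Fin 2) (ZMod 3) →ₐ[ZMod 3] MvPolynomial (Fin 2) (ZMod 3) :=
  aeval ![X 0, X 0 - X 1]
noncomputable def e3 : MvPolynomial (Fin 2) (ZMod 3) →ₐ[ZMod 3] MvPolynomial (Fin 2) (ZMod 3) :=
  aeval ![X 0, X 0 + X 1]

lemma gAct_N1 : gAct N1 = e1 := by
  have h : ((N1⁻¹ : Matrix.GeneralLinearGroup (Fin 2) (ZMod 3)) : Matrix (Fin 2) (Fin 2) (ZMod 3))
      = !![1, 0; 0, -1] := rfl
  apply MvPolynomial.algHom_ext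
  intro i
  fin_cases i <;>
    simp [gAct, e1, h, Fin.sum_univ_two]

lemma gAct_N2 : gAct N2 = e2 := by
  have h : ((N2⁻¹ : Matrix.GeneralLinearGroup (Fin 2) (ZMod 3)) : Matrix (Fin 2) (Fin 2) (ZMod 3))
      = !![-2, 0; 1, 2] := rfl
  have h2 : ((-2 : ZMod 3)) = 1 := rfl
  have h3 : ((2 : ZMod 3)) = -1 := rfl
  apply MvPolynomial.algHom_ext
  intro i
  fin_cases i <;>
    simp [gAct, e2, h, h2, h3, Fin.sum_univ_two, sub_eq_add_neg]

lemma e3_eq : e3 = e1.comp e2 := by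
  apply MvPolynomial.algHom_ext
  intro i
  fin_cases i <;> simp [e1, e2, e3]


noncomputable abbrev P2 := MvPolynomial (Fin 2) (ZMod 3)
noncomputable def gp : P2 := X 0 ^ 4 * X 1 ^ 2 + X 0 ^ 2 * X 1 ^ 4 + X 1 ^ 6

lemma char3 : (3 : P2) = 0 := by exact_mod_cast CharP.cast_eq_zero P2 3

lemma e1_X0 : e1 (X 0) = X 0 := by simp [e1]
lemma e2_X0 : e2 (X 0) = X 0 := by simp [e2]

lemma e1_gp : e1 gp = gp := by
  simp only [gp, e1, map_add, map_mul, map_pow, aeval_X, Matrix.cons_val_zero,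
    Matrix.cons_val_one, Matrix.head_cons]
  ring

lemma e2_gp : e2 gp = gp := by
  simp only [gp, e2, map_add, map_mul, map_pow, aeval_X, Matrix.cons_val_zero,
    Matrix.cons_val_one, Matrix.head_cons]
  linear_combination (X 0^6 - 4*X 0^5*X 1 + 7*X 0^4*X 1^2 - 8*X 0^3*X 1^3 + 5*X 0^2*X 1^4
    - 2*X 0*X 1^5 : P2) * char3

lemma perm_cover : ∀ σ : Equiv.Perm (Fin 3),
    σ = 1 ∨ σ = Equiv.swap 0 1 ∨ σ = Equiv.swap 1 2 ∨ σ = Equiv.swap 0 1 * Equiv.swap 1 2 ∨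
    σ = Equiv.swap 1 2 * Equiv.swap 0 1 ∨
    σ = Equiv.swap 0 1 * Equiv.swap 1 2 * Equiv.swap 0 1 := by decide


noncomputable abbrev R1 := MvPolynomial (Fin 1) (ZMod 3)
noncomputable def u : R1 := X 0
noncomputable def G : Polynomial R1 :=
  Polynomial.C u ^ 4 * Polynomial.X ^ 2 + Polynomial.C u ^ 2 * Polynomial.X ^ 4 + Polynomial.X ^ 6
noncomputable def t1 : Polynomial R1 →ₐ[R1] Polynomial R1 := Polynomial.aeval (-Polynomial.X)
noncomputable def t3 : Polynomial R1 →ₐ[R1] Polynomial R1 :=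
  Polynomial.aeval (Polynomial.X + Polynomial.C u)

lemma char3R : (3 : Polynomial R1) = 0 := by
  exact_mod_cast CharP.cast_eq_zero (Polynomial R1) 3

lemma G_monic : G.Monic := by
  unfold G
  monicity!

lemma G_natDegree : G.natDegree = 6 := by
  unfold G
  compute_degree!

lemma t1_C (r : R1) : t1 (Polynomial.C r) = Polynomial.C r := by
  simp [t1, Polynomial.algebraMap_eq]

lemma t3_C (r : R1) : t3 (Polynomial.C r) = Polynomial.C r := by
  simp [t3, Polynomial.algebraMap_eq]

lemma t1_G : t1 G = G := by
  simp only [G, t1, map_add, map_mul, map_pow, Polynomial.aeval_X, Polynomial.aeval_C,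
    Polynomial.algebraMap_eq]
  ring

lemma t3_G : t3 G = G := by
  simp only [G, t3, map_add, map_mul, map_pow, Polynomial.aeval_X, Polynomial.aeval_C,
    Polynomial.algebraMap_eq]
  linear_combination (2*Polynomial.C u*Polynomial.X^5 + 5*Polynomial.C u^2*Polynomial.X^4
    + 8*Polynomial.C u^3*Polynomial.X^3 + 7*Polynomial.C u^4*Polynomial.X^2
    + 4*Polynomial.C u^5*Polynomial.X + Polynomial.C u^6 : Polynomial R1) * char3R

lemma C_mem (r : R1) :
    (Polynomial.C r : Polynomial R1) ∈ Algebra.adjoin (ZMod 3) {Polynomial.C u, G} := by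
  have h1 : r ∈ Algebra.adjoin (ZMod 3) ({u} : Set R1) := by
    have h : Algebra.adjoin (ZMod 3) (Set.range (X : Fin 1 → R1)) = ⊤ :=
      MvPolynomial.adjoin_range_X
    have hr : Set.range (X : Fin 1 → R1) = {u} := by
      rw [Set.range_unique]; rfl
    rw [hr] at h
    rw [h]; trivial
  let φ : R1 →ₐ[ZMod 3] Polynomial R1 := IsScalarTower.toAlgHom (ZMod 3) R1 (Polynomial R1)
  have h2 : φ r ∈ (Algebra.adjoin (ZMod 3) ({u} : Set R1)).map φ :=
    Subalgebra.mem_map.mpr ⟨r, h1, rfl⟩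
  rw [AlgHom.map_adjoin] at h2
  have h3 : φ '' {u} = {Polynomial.C u} := by
    simp [φ, Polynomial.algebraMap_eq]
  rw [h3] at h2
  have h4 : φ r = Polynomial.C r := by simp [φ, Polynomial.algebraMap_eq]
  rw [h4] at h2
  exact Algebra.adjoin_mono (by simp) h2

lemma t1_comp (p : Polynomial R1) : t1 p = p.comp (-Polynomial.X) := by
  rw [Polynomial.comp, t1, Polynomial.aeval_def, Polynomial.algebraMap_eq]

lemma t3_taylor (p : Polynomial R1) : t3 p = Polynomial.taylor u p := by
  rw [Polynomial.taylor_apply, Polynomial.comp, t3, Polynomial.aeval_def, Polynomial.algebraMap_eq]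

lemma even_natDegree {p : Polynomial R1} (hp : p ≠ 0) (h1 : t1 p = p) : Even p.natDegree := by
  have hc : p.comp (-Polynomial.X) = p := by rw [← t1_comp, h1]
  have hq : (-Polynomial.X : Polynomial R1).natDegree ≠ 0 := by simp
  have hlc := Polynomial.leadingCoeff_comp (p := p) hq
  rw [hc] at hlc
  have hl : (-Polynomial.X : Polynomial R1).leadingCoeff = -1 := by simp
  rw [hl] at hlc
  have ha : p.leadingCoeff ≠ 0 := Polynomial.leadingCoeff_ne_zero.mpr hp
  have h2 : ((-1 : R1)) ^ p.natDegree = 1 :=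
    mul_left_cancel₀ ha (hlc.symm.trans (mul_one _).symm)
  by_contra hodd
  rw [Nat.not_even_iff_odd] at hodd
  rw [hodd.neg_one_pow] at h2
  have h4 : (2 : R1) = 0 := by linear_combination -h2
  have h5 := congrArg (MvPolynomial.eval (fun _ => (0 : ZMod 3))) h4
  simp only [map_ofNat, map_zero] at h5
  exact absurd h5 (by decide)

lemma three_dvd_natDegree {p : Polynomial R1} (hp : p.natDegree ≠ 0) (h3 : t3 p = p) :
    3 ∣ p.natDegree := by
  set d := p.natDegree with hd
  have hd1 : 1 ≤ d := Nat.one_le_iff_ne_zero.mpr hp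
  have hp0 : p ≠ 0 := fun h => hp (by rw [hd, h, Polynomial.natDegree_zero])
  have htay : Polynomial.taylor u p = p := by rw [← t3_taylor, h3]
  set q := Polynomial.hasseDeriv (d - 1) p with hqdef
  have hqdeg : q.natDegree < 2 :=
    lt_of_le_of_lt (Polynomial.natDegree_hasseDeriv_le p (d - 1)) (by omega)
  have heval : q.eval u = q.coeff 0 + q.coeff 1 * u := by
    rw [Polynomial.eval_eq_sum_range' hqdeg]
    rw [Finset.sum_range_succ, Finset.sum_range_one]
    ring
  have hc0 : q.coeff 0 = p.coeff (d - 1) := by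
    rw [hqdef, Polynomial.hasseDeriv_coeff]
    simp [Nat.choose_self]
  have hc1 : q.coeff 1 = (d : R1) * p.coeff d := by
    rw [hqdef, Polynomial.hasseDeriv_coeff]
    have e1 : 1 + (d - 1) = d := by omega
    rw [e1]
    have e2 : d.choose (d - 1) = d := by
      rw [← Nat.choose_symm (by omega : d - 1 ≤ d), show d - (d - 1) = 1 by omega,
        Nat.choose_one_right]
    rw [e2]
  have h : q.eval u = p.coeff (d - 1) := by
    rw [hqdef, ← Polynomial.taylor_coeff, htay]
  rw [heval, hc0, hc1] at h
  have hmain : (d : R1) * p.coeff d * u = 0 := by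
    have := add_eq_left.mp h
    linear_combination this
  have hpd : p.coeff d ≠ 0 := by
    rw [hd, Polynomial.coeff_natDegree]
    exact Polynomial.leadingCoeff_ne_zero.mpr hp0
  have hu : u ≠ 0 := MvPolynomial.X_ne_zero 0
  have hdz : (d : R1) = 0 := by
    rcases mul_eq_zero.mp hmain with h' | h'
    · rcases mul_eq_zero.mp h' with h'' | h''
      · exact h''
      · exact absurd h'' hpd
    · exact absurd h' hu
  have hdz3 : ((d : ZMod 3)) = 0 := by
    have hC : (d : R1) = MvPolynomial.C ((d : ZMod 3)) := by rw [map_natCast]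
    rw [hC] at hdz
    exact by
      have := MvPolynomial.C_injective (Fin 1) (ZMod 3) (hdz.trans (MvPolynomial.C_0).symm)
      exact this
  exact (ZMod.natCast_eq_zero_iff d 3).mp hdz3

lemma key (p : Polynomial R1) (h1 : t1 p = p) (h3 : t3 p = p) :
    p ∈ Algebra.adjoin (ZMod 3) {Polynomial.C u, G} := by
  suffices H : ∀ n : ℕ, ∀ p : Polynomial R1, p.natDegree ≤ n → t1 p = p → t3 p = p →
      p ∈ Algebra.adjoin (ZMod 3) {Polynomial.C u, G} from H p.natDegree p le_rfl h1 h3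
  intro n
  induction n using Nat.strong_induction_on with
  | _ n IH =>
    intro p hpn h1 h3
    by_cases hd0 : p.natDegree = 0
    · obtain ⟨a, rfl⟩ := Polynomial.natDegree_eq_zero.mp hd0
      exact C_mem a
    · have hp0 : p ≠ 0 := fun h => hd0 (by rw [h, Polynomial.natDegree_zero])
      have heven : Even p.natDegree := even_natDegree hp0 h1
      have h3dvd : 3 ∣ p.natDegree := three_dvd_natDegree hd0 h3
      have h6 : 6 ∣ p.natDegree := by
        rcases heven with ⟨m, hm⟩
        rcases h3dvd with ⟨l, hl⟩
        omega
      obtain ⟨k, hk⟩ := h6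
      set a := p.leadingCoeff with halc
      have ha : a ≠ 0 := Polynomial.leadingCoeff_ne_zero.mpr hp0
      set q : Polynomial R1 := Polynomial.C a * G ^ k with hqdef
      have hGk : (G ^ k).Monic := G_monic.pow k
      have hqdeg : q.natDegree = p.natDegree := by
        rw [hqdef, Polynomial.natDegree_C_mul ha, Polynomial.natDegree_pow, G_natDegree, hk]
        ring
      have hqlc : q.leadingCoeff = a := by
        rw [hqdef, Polynomial.leadingCoeff_mul, Polynomial.leadingCoeff_C, hGk.leadingCoeff,
          mul_one]
      have hq0 : q ≠ 0 := fun h => ha (by rw [← hqlc, h, Polynomial.leadingCoeff_zero])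
      have hqmem : q ∈ Algebra.adjoin (ZMod 3) {Polynomial.C u, G} := by
        exact mul_mem (C_mem a)
          (pow_mem (Algebra.subset_adjoin (by simp)) k)
      have hq1 : t1 q = q := by
        rw [hqdef, map_mul, map_pow, t1_C, t1_G]
      have hq3 : t3 q = q := by
        rw [hqdef, map_mul, map_pow, t3_C, t3_G]
      set r : Polynomial R1 := p - q with hrdef
      have hr1 : t1 r = r := by rw [hrdef, map_sub, h1, hq1]
      have hr3 : t3 r = r := by rw [hrdef, map_sub, h3, hq3]
      have hdeglt : r.degree < p.degree := by
        apply Polynomial.degree_sub_lt _ hp0 (by rw [hqlc])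
        rw [Polynomial.degree_eq_natDegree hp0, Polynomial.degree_eq_natDegree hq0, hqdeg]
      have hrn : r.natDegree < n := by
        rcases eq_or_ne r 0 with hr0 | hr0
        · rw [hr0, Polynomial.natDegree_zero]
          omega
        · exact lt_of_lt_of_le (Polynomial.natDegree_lt_natDegree hr0 hdeglt) hpn
      have hrmem := IH r.natDegree hrn r le_rfl hr1 hr3
      have : p = r + q := by rw [hrdef]; ring
      rw [this]
      exact add_mem hrmem hqmem


noncomputable def ψ : P2 ≃ₐ[ZMod 3] Polynomial R1 :=
  (MvPolynomial.renameEquiv (ZMod 3) (Equiv.swap (0 : Fin 2) 1)).trans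
    (MvPolynomial.finSuccEquiv (ZMod 3) 1)

lemma psi_X0 : ψ (X 0) = Polynomial.C u := by
  simp only [ψ, u, AlgEquiv.trans_apply, MvPolynomial.renameEquiv_apply, MvPolynomial.rename_X,
    Equiv.swap_apply_left, MvPolynomial.finSuccEquiv_apply, MvPolynomial.eval₂Hom_X']
  rw [show (1 : Fin 2) = (0 : Fin 1).succ from rfl, Fin.cases_succ]

lemma psi_X1 : ψ (X 1) = Polynomial.X := by
  simp [ψ, MvPolynomial.finSuccEquiv_apply]

lemma psi_C (a : ZMod 3) : ψ (MvPolynomial.C a) = Polynomial.C (MvPolynomial.C a) := by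
  have h := ψ.commutes a
  rw [MvPolynomial.algebraMap_eq] at h
  rw [h, Polynomial.algebraMap_apply, MvPolynomial.algebraMap_eq]

lemma e1_C (a : ZMod 3) : e1 (MvPolynomial.C a) = MvPolynomial.C a := by
  rw [e1, aeval_C, MvPolynomial.algebraMap_eq]

lemma t1_C' (r : R1) : t1 (Polynomial.C r) = Polynomial.C r := by
  rw [t1, Polynomial.aeval_C, Polynomial.algebraMap_eq]

lemma psi_e1_X (i : Fin 2) : ψ (e1 (X i)) = t1 (ψ (X i)) := by
  fin_cases i
  · rw [show X (⟨0, by omega⟩ : Fin 2) = (X 0 : P2) from rfl]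
    rw [show e1 (X 0) = (X 0 : P2) by simp [e1], psi_X0, t1_C']
  · rw [show X (⟨1, by omega⟩ : Fin 2) = (X 1 : P2) from rfl]
    rw [show e1 (X 1) = (-X 1 : P2) by simp [e1], map_neg, psi_X1, t1,
      Polynomial.aeval_X]

lemma psi_e1 (f : P2) : ψ (e1 f) = t1 (ψ f) := by
  induction f using MvPolynomial.induction_on with
  | C a => rw [e1_C, psi_C, t1_C']
  | add p q hp hq => rw [map_add, map_add, map_add, map_add, hp, hq]
  | mul_X p i hp => rw [map_mul, map_mul, map_mul, map_mul, hp, psi_e1_X]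

lemma e3_C (a : ZMod 3) : e3 (MvPolynomial.C a) = MvPolynomial.C a := by
  rw [e3, aeval_C, MvPolynomial.algebraMap_eq]

lemma t3_C' (r : R1) : t3 (Polynomial.C r) = Polynomial.C r := by
  rw [t3, Polynomial.aeval_C, Polynomial.algebraMap_eq]

lemma psi_e3_X (i : Fin 2) : ψ (e3 (X i)) = t3 (ψ (X i)) := by
  fin_cases i
  · rw [show X (⟨0, by omega⟩ : Fin 2) = (X 0 : P2) from rfl]
    rw [show e3 (X 0) = (X 0 : P2) by simp [e3], psi_X0, t3_C']
  · rw [show X (⟨1, by omega⟩ : Fin 2) = (X 1 : P2) from rfl]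
    rw [show e3 (X 1) = (X 0 + X 1 : P2) by simp [e3], map_add, psi_X0, psi_X1, t3,
      Polynomial.aeval_X]
    exact add_comm _ _

lemma psi_e3 (f : P2) : ψ (e3 f) = t3 (ψ f) := by
  induction f using MvPolynomial.induction_on with
  | C a => rw [e3_C, psi_C, t3_C']
  | add p q hp hq => rw [map_add, map_add, map_add, map_add, hp, hq]
  | mul_X p i hp => rw [map_mul, map_mul, map_mul, map_mul, hp, psi_e3_X]

lemma psi_gp : ψ gp = G := by
  simp only [gp, G, map_add, map_mul, map_pow, psi_X0, psi_X1]

lemma hard_dir (f : P2) (hf1 : e1 f = f) (hf3 : e3 f = f) :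
    f ∈ Algebra.adjoin (ZMod 3) {(X 0 : P2), gp} := by
  have hp1 : t1 (ψ f) = ψ f := by rw [← psi_e1, hf1]
  have hp3 : t3 (ψ f) = ψ f := by rw [← psi_e3, hf3]
  have hmem := key (ψ f) hp1 hp3
  have himg : Algebra.adjoin (ZMod 3) {Polynomial.C u, G} =
      (Algebra.adjoin (ZMod 3) {(X 0 : P2), gp}).map
        (ψ : P2 ≃ₐ[ZMod 3] Polynomial R1).toAlgHom := by
    rw [AlgHom.map_adjoin]
    congr 1
    rw [Set.image_insert_eq, Set.image_singleton]
    simp only [AlgEquiv.coe_algHom, psi_X0, psi_gp]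
  rw [himg] at hmem
  obtain ⟨g, hg, hgf⟩ := hmem
  have hgf' : ψ g = ψ f := hgf
  have : g = f := ψ.injective hgf'
  rwa [← this]


end Stmt19Proof

open Stmt19Proof

/-- For the `S₃`-representation over `𝔽₃` sending `(1 2) ↦ [[1,0],[0,-1]]` and
`(2 3) ↦ [[-2,0],[1,2]]`, the ring of invariants is the polynomial ring
`𝔽₃[x, x⁴y² + x²y⁴ + y⁶]`. -/

theorem stmt19 (ρ : Equiv.Perm (Fin 3) →* Matrix.GeneralLinearGroup (Fin 2) (ZMod 3))
    (h12 : ρ (Equiv.swap 0 1) = N1) (h23 : ρ (Equiv.swap 1 2) = N2) :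
    invariantRing ρ =
      Algebra.adjoin (ZMod 3)
        {(X 0 : MvPolynomial (Fin 2) (ZMod 3)),
          X 0 ^ 4 * X 1 ^ 2 + X 0 ^ 2 * X 1 ^ 4 + X 1 ^ 6} := by
  have hmem_iff : ∀ f : MvPolynomial (Fin 2) (ZMod 3),
      f ∈ invariantRing ρ ↔ ∀ σ, gAct (ρ σ) f = f := by
    intro f
    simp [invariantRing, Algebra.mem_iInf, AlgHom.mem_equalizer]
  have hgp : (X 0 ^ 4 * X 1 ^ 2 + X 0 ^ 2 * X 1 ^ 4 + X 1 ^ 6 :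
      MvPolynomial (Fin 2) (ZMod 3)) = gp := rfl
  have hfix : ∀ f : MvPolynomial (Fin 2) (ZMod 3), e1 f = f → e2 f = f →
      ∀ σ : Equiv.Perm (Fin 3), gAct (ρ σ) f = f := by
    intro f hf1 hf2 σ
    rcases perm_cover σ with h|h|h|h|h|h <;> subst h <;>
      simp only [map_one, gAct_one, AlgHom.id_apply, map_mul, gAct_mul, AlgHom.comp_apply,
        h12, h23, gAct_N1, gAct_N2, hf1, hf2]
  apply le_antisymm
  · intro f hf
    have hσ := (hmem_iff f).mp hf
    have hf1 : e1 f = f := by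
      have h := hσ (Equiv.swap 0 1)
      rwa [h12, gAct_N1] at h
    have hf2 : e2 f = f := by
      have h := hσ (Equiv.swap 1 2)
      rwa [h23, gAct_N2] at h
    have hf3 : e3 f = f := by
      rw [e3_eq]
      show e1 (e2 f) = f
      rw [hf2, hf1]
    rw [hgp]
    exact hard_dir f hf1 hf3
  · apply Algebra.adjoin_le
    intro g hg
    rcases hg with h | h
    · subst h
      exact (hmem_iff _).mpr (hfix _ e1_X0 e2_X0)
    · rw [Set.mem_singleton_iff] at h
      subst h
      have hinv := hfix gp e1_gp e2_gp
      rw [← hgp] at hinv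
      exact (hmem_iff _).mpr hinv
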